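/- Let A be an m×n complex matrix decomposed into two stacked blocks, A = [B; G], where B is m₁×n, G is m₂×n and m = m₁ + m₂. Consider an orthogonal decomposition ℂ^n = E⁻ ⊕ E⁺ where E⁻ and E⁺ are spanned by two disjoint sets of right singular vectors of B (equivalently, they are invariant subspaces of B*B). Set s_A = inf{‖Ax‖₂ : ‖x‖₂ = 1}, s_B = inf{‖Bx‖₂ : x ∈ E⁺, ‖x‖₂ = 1}, and s_G = inf{‖Gx‖₂ : x ∈ E⁻, ‖x‖₂ = 1}. Then s_B · s_G ≤ 4 ‖A‖ · s_A, where ‖A‖ is the operator norm of A. -/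

import Mathlib

open Matrix
open scoped ComplexConjugate

noncomputable section

/-- The Euclidean norm of a finitely indexed vector with entries in `ℝ` or `ℂ`. -/
def eNorm {𝕜 : Type*} [RCLike 𝕜] {ι : Type*} [Fintype ι] (v : ι → 𝕜) : ℝ :=
  Real.sqrt (∑ i, ‖v i‖ ^ 2)

/-- Operator (spectral) norm of a matrix: `sup { ‖Ax‖₂ : ‖x‖₂ ≤ 1 }`. -/
def opNorm {𝕜 : Type*} [RCLike 𝕜] {m n : Type*} [Fintype m] [Fintype n]
    (A : Matrix m n 𝕜) : ℝ :=
  sSup {r : ℝ | ∃ x : n → 𝕜, eNorm x ≤ 1 ∧ r = eNorm (A.mulVec x)}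

/-- Smallest singular value of a matrix: `inf { ‖Ax‖₂ : ‖x‖₂ = 1 }`. -/
def sMin {𝕜 : Type*} [RCLike 𝕜] {m n : Type*} [Fintype m] [Fintype n]
    (A : Matrix m n 𝕜) : ℝ :=
  sInf {r : ℝ | ∃ x : n → 𝕜, eNorm x = 1 ∧ r = eNorm (A.mulVec x)}

open scoped Matrix.Norms.L2Operator

lemma eNorm_eq {ι : Type*} [Fintype ι] (y : EuclideanSpace ℂ ι) : eNorm y = ‖y‖ := by
  rw [EuclideanSpace.norm_eq]; rfl

lemma eNorm_nonneg {ι : Type*} [Fintype ι] (v : ι → ℂ) : 0 ≤ eNorm v := Real.sqrt_nonneg _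

lemma eNorm_zero {ι : Type*} [Fintype ι] : eNorm (0 : ι → ℂ) = 0 := by
  simp [eNorm]

lemma eNorm_mulVec_le {m n : Type*} [Fintype m] [Fintype n] [DecidableEq n] (A : Matrix m n ℂ)
    (y : EuclideanSpace ℂ n) : eNorm (A.mulVec y) ≤ ‖A‖ * eNorm y := by
  rw [eNorm_eq y,
    show eNorm (A.mulVec y) = ‖(EuclideanSpace.equiv m ℂ).symm (A *ᵥ y)‖ from
      eNorm_eq ((EuclideanSpace.equiv m ℂ).symm (A *ᵥ y))]
  exact A.l2_opNorm_mulVec y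

section OpNormFacts

variable {m n : Type*} [Fintype m] [Fintype n] [DecidableEq n] (A : Matrix m n ℂ)

lemma opNorm_bddAbove :
    BddAbove {r : ℝ | ∃ x : n → ℂ, eNorm x ≤ 1 ∧ r = eNorm (A.mulVec x)} := by
  refine ⟨‖A‖, ?_⟩
  rintro r ⟨x, hx, rfl⟩
  calc eNorm (A.mulVec x) ≤ ‖A‖ * eNorm x := eNorm_mulVec_le A (WithLp.toLp 2 x)
    _ ≤ ‖A‖ * 1 := by
        exact mul_le_mul_of_nonneg_left hx (norm_nonneg _)
    _ = ‖A‖ := mul_one _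

lemma le_opNorm (x : n → ℂ) (hx : eNorm x ≤ 1) : eNorm (A.mulVec x) ≤ opNorm A :=
  le_csSup (opNorm_bddAbove A) ⟨x, hx, rfl⟩

lemma opNorm_nonneg : 0 ≤ opNorm A := by
  have h0 : (0 : ℝ) ∈ {r : ℝ | ∃ x : n → ℂ, eNorm x ≤ 1 ∧ r = eNorm (A.mulVec x)} :=
    ⟨0, by simp [eNorm_zero], by simp [eNorm_zero, Matrix.mulVec_zero]⟩
  exact le_csSup (opNorm_bddAbove A) h0

omit [DecidableEq n] in
lemma eNorm_eq_zero_iff (y : EuclideanSpace ℂ n) : eNorm y = 0 ↔ y = 0 := by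
  rw [eNorm_eq, norm_eq_zero]

omit [DecidableEq n] in
lemma eNorm_smul (c : ℂ) (y : EuclideanSpace ℂ n) : eNorm (c • y) = ‖c‖ * eNorm y := by
  rw [show eNorm (c • y) = ‖c • y‖ from eNorm_eq _, eNorm_eq, norm_smul]

lemma eNorm_mulVec_le_opNorm (y : EuclideanSpace ℂ n) :
    eNorm (A.mulVec y) ≤ opNorm A * eNorm y := by
  by_cases hy : y = 0
  · subst hy
    simp only [show ((0 : EuclideanSpace ℂ n) : n → ℂ) = 0 from rfl, Matrix.mulVec_zero]
    rw [eNorm_zero]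
    exact mul_nonneg (opNorm_nonneg A) (eNorm_nonneg _)
  · have hpos : 0 < eNorm y := by
      rcases lt_or_eq_of_le (eNorm_nonneg (y : n → ℂ)) with h | h
      · exact h
      · exact absurd ((eNorm_eq_zero_iff y).mp h.symm) hy
    set c : ℝ := eNorm y with hc
    have hz : eNorm (A.mulVec (((c⁻¹ : ℝ) : ℂ) • y)) ≤ opNorm A := by
      apply le_opNorm
      rw [show eNorm (((c⁻¹ : ℝ) : ℂ) • (y : n → ℂ))
          = eNorm (((c⁻¹ : ℝ) : ℂ) • y) from rfl, eNorm_smul]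
      rw [Complex.norm_real, Real.norm_eq_abs, abs_of_pos (inv_pos.mpr hpos)]
      rw [← hc, inv_mul_cancel₀ (ne_of_gt hpos)]
    have heq : eNorm (A.mulVec (((c⁻¹ : ℝ) : ℂ) • y))
        = c⁻¹ * eNorm (A.mulVec y) := by
      rw [Matrix.mulVec_smul]
      rw [show eNorm ((((c⁻¹ : ℝ) : ℂ)) • A.mulVec (y : n → ℂ))
          = ‖(((c⁻¹ : ℝ)) : ℂ)‖ * eNorm (A.mulVec (y : n → ℂ)) from
        eNorm_smul (n := m) _ ((EuclideanSpace.equiv m ℂ).symm (A.mulVec (y : n → ℂ)))]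
      rw [Complex.norm_real, Real.norm_eq_abs, abs_of_pos (inv_pos.mpr hpos)]
    rw [heq] at hz
    have := mul_le_mul_of_nonneg_right hz (le_of_lt hpos)
    rw [mul_comm c⁻¹ _, mul_assoc, inv_mul_cancel₀ (ne_of_gt hpos), mul_one] at this
    exact this

end OpNormFacts

lemma sq_eNorm {ι : Type*} [Fintype ι] (v : ι → ℂ) : eNorm v ^ 2 = ∑ i, ‖v i‖ ^ 2 :=
  Real.sq_sqrt (Finset.sum_nonneg fun _ _ => sq_nonneg _)

lemma enorm_le_of_sq_le_sq {a c : ℝ} (ha : 0 ≤ a) (hc : 0 ≤ c) (h : a ^ 2 ≤ c ^ 2) : a ≤ c := by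
  nlinarith

section FromRows

variable {m₁ m₂ n : ℕ} (B : Matrix (Fin m₁) (Fin n) ℂ) (G : Matrix (Fin m₂) (Fin n) ℂ)

lemma eNorm_fromRows_sq (x : Fin n → ℂ) :
    eNorm ((Matrix.fromRows B G).mulVec x) ^ 2
      = eNorm (B.mulVec x) ^ 2 + eNorm (G.mulVec x) ^ 2 := by
  rw [sq_eNorm, sq_eNorm, sq_eNorm, Matrix.fromRows_mulVec]
  simp [Fintype.sum_sum_type]

lemma eNorm_top_le (x : Fin n → ℂ) :
    eNorm (B.mulVec x) ≤ eNorm ((Matrix.fromRows B G).mulVec x) :=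
  enorm_le_of_sq_le_sq (eNorm_nonneg _) (eNorm_nonneg _)
    (by rw [eNorm_fromRows_sq]; nlinarith [sq_nonneg (eNorm (G.mulVec x))])

lemma eNorm_bot_le (x : Fin n → ℂ) :
    eNorm (G.mulVec x) ≤ eNorm ((Matrix.fromRows B G).mulVec x) :=
  enorm_le_of_sq_le_sq (eNorm_nonneg _) (eNorm_nonneg _)
    (by rw [eNorm_fromRows_sq]; nlinarith [sq_nonneg (eNorm (B.mulVec x))])

lemma inner_mulVec_eq (u v : EuclideanSpace ℂ (Fin n)) :
    (inner ℂ ((EuclideanSpace.equiv (Fin m₁) ℂ).symm (B.mulVec v))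
        ((EuclideanSpace.equiv (Fin m₁) ℂ).symm (B.mulVec u)) : ℂ)
      = inner ℂ v ((EuclideanSpace.equiv (Fin n) ℂ).symm ((Bᴴ * B).mulVec u)) := by
  rw [EuclideanSpace.inner_eq_star_dotProduct, EuclideanSpace.inner_eq_star_dotProduct,
    dotProduct_comm _ (star _), dotProduct_comm _ (star _)]
  show star (B.mulVec v) ⬝ᵥ (B.mulVec u) = star (v : Fin n → ℂ) ⬝ᵥ ((Bᴴ * B).mulVec u)
  rw [Matrix.star_mulVec]
  rw [Matrix.dotProduct_mulVec (star (v : Fin n → ℂ)) (Bᴴ * B) u]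
  rw [Matrix.dotProduct_mulVec (star (v : Fin n → ℂ) ᵥ* Bᴴ) B u]
  rw [Matrix.vecMul_vecMul]

end FromRows

lemma eNorm_sub_le {ι : Type*} [Fintype ι] (f g : ι → ℂ) :
    eNorm (f - g) ≤ eNorm f + eNorm g := by
  calc eNorm (f - g) = ‖(EuclideanSpace.equiv ι ℂ).symm f
        - (EuclideanSpace.equiv ι ℂ).symm g‖ := eNorm_eq _
    _ ≤ ‖(EuclideanSpace.equiv ι ℂ).symm f‖ + ‖(EuclideanSpace.equiv ι ℂ).symm g‖ :=
        norm_sub_le _ _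
    _ = eNorm f + eNorm g := by rw [← eNorm_eq, ← eNorm_eq]; rfl

lemma eNorm_mulVec_real_smul {k n : ℕ} (M : Matrix (Fin k) (Fin n) ℂ) (a : ℝ)
    (v : EuclideanSpace ℂ (Fin n)) :
    eNorm (M.mulVec (((a : ℂ) • v : EuclideanSpace ℂ (Fin n)))) = |a| * eNorm (M.mulVec v) := by
  rw [show ((((a : ℂ) • v : EuclideanSpace ℂ (Fin n))) : Fin n → ℂ)
        = (a : ℂ) • (v : Fin n → ℂ) from rfl,
    Matrix.mulVec_smul,
    show eNorm ((a : ℂ) • M.mulVec (v : Fin n → ℂ))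
        = ‖(a : ℂ)‖ * eNorm (M.mulVec (v : Fin n → ℂ)) from
      eNorm_smul _ ((EuclideanSpace.equiv (Fin k) ℂ).symm (M.mulVec (v : Fin n → ℂ))),
    Complex.norm_real, Real.norm_eq_abs]

lemma eNorm_real_smul {n : ℕ} (a : ℝ) (v : EuclideanSpace ℂ (Fin n)) :
    eNorm (((a : ℂ) • v : EuclideanSpace ℂ (Fin n))) = |a| * eNorm v := by
  rw [show eNorm (((a : ℂ) • v : EuclideanSpace ℂ (Fin n))) = ‖(a : ℂ)‖ * eNorm v from
      eNorm_smul _ v, Complex.norm_real, Real.norm_eq_abs]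

lemma eNorm_le_add {ι : Type*} [Fintype ι] (f g : ι → ℂ) :
    eNorm f ≤ eNorm (f + g) + eNorm g := by
  have h := eNorm_sub_le (f + g) g
  simpa using h

lemma sqrt_two_le_two : Real.sqrt 2 ≤ 2 := by
  nlinarith [Real.sq_sqrt (by norm_num : (0:ℝ) ≤ 2), Real.sqrt_nonneg 2]

set_option maxHeartbeats 2000000 in
/-- **Decomposition lemma** (Rudelson–Vershynin, Lemma 5.12).  If `A = [B; G]` is a block
matrix, and `ℂ^n = E⁻ ⊕ E⁺` is an orthogonal decomposition into invariant subspaces of `B*B`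
(spans of disjoint sets of right singular vectors of `B`), then `s_B · s_G ≤ 4 ‖A‖ s_A`. -/
theorem decomposition_lemma
    (m₁ m₂ n : ℕ)
    (B : Matrix (Fin m₁) (Fin n) ℂ) (G : Matrix (Fin m₂) (Fin n) ℂ)
    (Eminus Eplus : Submodule ℂ (EuclideanSpace ℂ (Fin n)))
    (hperp : Eplus = Eminusᗮ)
    (hinv : ∀ x : EuclideanSpace ℂ (Fin n), x ∈ Eminus →
      (show EuclideanSpace ℂ (Fin n) from WithLp.toLp 2 ((Bᴴ * B).mulVec x)) ∈ Eminus) :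
    (sInf {r : ℝ | ∃ x : EuclideanSpace ℂ (Fin n),
            x ∈ Eplus ∧ eNorm x = 1 ∧ r = eNorm (B.mulVec x)}) *
      (sInf {r : ℝ | ∃ x : EuclideanSpace ℂ (Fin n),
            x ∈ Eminus ∧ eNorm x = 1 ∧ r = eNorm (G.mulVec x)}) ≤
    4 * opNorm (Matrix.fromRows B G) * sMin (Matrix.fromRows B G) := by
  classical
  set SB := {r : ℝ | ∃ x : EuclideanSpace ℂ (Fin n),
      x ∈ Eplus ∧ eNorm x = 1 ∧ r = eNorm (B.mulVec x)} with hSBdef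
  set SG := {r : ℝ | ∃ x : EuclideanSpace ℂ (Fin n),
      x ∈ Eminus ∧ eNorm x = 1 ∧ r = eNorm (G.mulVec x)} with hSGdef
  set A := Matrix.fromRows B G with hAdef
  have hsB0 : 0 ≤ sInf SB :=
    Real.sInf_nonneg (by rintro r ⟨x, -, -, rfl⟩; exact eNorm_nonneg _)
  have hsG0 : 0 ≤ sInf SG :=
    Real.sInf_nonneg (by rintro r ⟨x, -, -, rfl⟩; exact eNorm_nonneg _)
  have hop0 : 0 ≤ opNorm A := opNorm_nonneg A
  have hsMin0 : 0 ≤ sMin A :=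
    Real.sInf_nonneg (by rintro r ⟨x, -, rfl⟩; exact eNorm_nonneg _)
  by_cases hEp : ∃ p : EuclideanSpace ℂ (Fin n), p ∈ Eplus ∧ eNorm p = 1
  swap
  · have hempty : SB = ∅ := Set.eq_empty_iff_forall_notMem.mpr
      (fun r ⟨x, hx1, hx2, _⟩ => hEp ⟨x, hx1, hx2⟩)
    rw [hempty, Real.sInf_empty, zero_mul]
    positivity
  by_cases hEm : ∃ q : EuclideanSpace ℂ (Fin n), q ∈ Eminus ∧ eNorm q = 1
  swap
  · have hempty : SG = ∅ := Set.eq_empty_iff_forall_notMem.mpr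
      (fun r ⟨x, hx1, hx2, _⟩ => hEm ⟨x, hx1, hx2⟩)
    rw [hempty, Real.sInf_empty, mul_zero]
    positivity
  obtain ⟨p, hpP, hp1⟩ := hEp
  obtain ⟨q, hqM, hq1⟩ := hEm
  have hSBle : ∀ z : EuclideanSpace ℂ (Fin n), z ∈ Eplus → eNorm z = 1 →
      sInf SB ≤ eNorm (B.mulVec z) := fun z hz h1 =>
    csInf_le ⟨0, by rintro r ⟨x, -, -, rfl⟩; exact eNorm_nonneg _⟩ ⟨z, hz, h1, rfl⟩
  have hSGle : ∀ z : EuclideanSpace ℂ (Fin n), z ∈ Eminus → eNorm z = 1 →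
      sInf SG ≤ eNorm (G.mulVec z) := fun z hz h1 =>
    csInf_le ⟨0, by rintro r ⟨x, -, -, rfl⟩; exact eNorm_nonneg _⟩ ⟨z, hz, h1, rfl⟩
  have hBA : sInf SB ≤ opNorm A :=
    (hSBle p hpP hp1).trans ((eNorm_top_le B G p).trans (le_opNorm A p (le_of_eq hp1)))
  have hGA : sInf SG ≤ opNorm A :=
    (hSGle q hqM hq1).trans ((eNorm_bot_le B G q).trans (le_opNorm A q (le_of_eq hq1)))
  have key : ∀ ε : ℝ, 0 < ε → sInf SB * sInf SG ≤ 4 * opNorm A * (sMin A + ε) := by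
    intro ε hε
    have hSpos : 0 < sMin A + ε := by linarith
    have hSAne : {r : ℝ | ∃ x : Fin n → ℂ, eNorm x = 1 ∧ r = eNorm (A.mulVec x)}.Nonempty :=
      ⟨eNorm (A.mulVec p), p, hp1, rfl⟩
    obtain ⟨r, ⟨x0, hx01, rfl⟩, hrlt⟩ := exists_lt_of_csInf_lt hSAne
      (lt_add_of_pos_right (sMin A) hε)
    set y : EuclideanSpace ℂ (Fin n) := (EuclideanSpace.equiv (Fin n) ℂ).symm x0 with hydef
    set u : EuclideanSpace ℂ (Fin n) :=
      (Eminus.orthogonalProjectionOnto y : EuclideanSpace ℂ (Fin n)) with hudef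
    have huM : u ∈ Eminus := Submodule.coe_mem _
    set v : EuclideanSpace ℂ (Fin n) := y - u with hvdef
    have hvP' : v ∈ Eminusᗮ := Eminus.sub_starProjection_mem_orthogonal y
    have hvP : v ∈ Eplus := hperp ▸ hvP'
    have hyuv : y = u + v := by rw [hvdef]; abel
    have hy1 : ‖y‖ = 1 := by rw [← eNorm_eq y]; exact hx01
    have hnorm_y : ‖u‖ ^ 2 + ‖v‖ ^ 2 = 1 := by
      have h := norm_add_sq_eq_norm_sq_add_norm_sq_of_inner_eq_zero u v
        (Submodule.inner_right_of_mem_orthogonal huM hvP')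
      rw [← hyuv, hy1] at h
      rw [pow_two, pow_two]
      simpa using h.symm
    -- Pythagoras for B
    have hBvx : eNorm (B.mulVec v) ≤ eNorm (B.mulVec x0) := by
      have hBinner : (inner ℂ ((EuclideanSpace.equiv (Fin m₁) ℂ).symm (B.mulVec v))
          ((EuclideanSpace.equiv (Fin m₁) ℂ).symm (B.mulVec u)) : ℂ) = 0 := by
        rw [inner_mulVec_eq]
        exact Submodule.inner_left_of_mem_orthogonal (hinv u huM) hvP'
      have hpyth := norm_add_sq_eq_norm_sq_add_norm_sq_of_inner_eq_zero _ _ hBinner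
      have hadd : (EuclideanSpace.equiv (Fin m₁) ℂ).symm (B.mulVec v)
          + (EuclideanSpace.equiv (Fin m₁) ℂ).symm (B.mulVec u)
          = (EuclideanSpace.equiv (Fin m₁) ℂ).symm (B.mulVec x0) := by
        rw [← map_add]; congr 1
        show B.mulVec (v : Fin n → ℂ) + B.mulVec (u : Fin n → ℂ) = B.mulVec x0
        have hvy : (v : Fin n → ℂ) + (u : Fin n → ℂ) = x0 :=
          congrArg (fun z : EuclideanSpace ℂ (Fin n) => (z : Fin n → ℂ))
            (show v + u = y by rw [hyuv]; abel)
        rw [← Matrix.mulVec_add, hvy]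
      rw [hadd] at hpyth
      refine enorm_le_of_sq_le_sq (eNorm_nonneg _) (eNorm_nonneg _) ?_
      rw [show eNorm (B.mulVec (v : Fin n → ℂ))
            = ‖(EuclideanSpace.equiv (Fin m₁) ℂ).symm (B.mulVec v)‖ from
              eNorm_eq ((EuclideanSpace.equiv (Fin m₁) ℂ).symm (B.mulVec v)),
          show eNorm (B.mulVec x0)
            = ‖(EuclideanSpace.equiv (Fin m₁) ℂ).symm (B.mulVec x0)‖ from
              eNorm_eq ((EuclideanSpace.equiv (Fin m₁) ℂ).symm (B.mulVec x0)),
          pow_two, pow_two, hpyth]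
      nlinarith [mul_self_nonneg ‖(EuclideanSpace.equiv (Fin m₁) ℂ).symm (B.mulVec u)‖]
    have hBx0 : eNorm (B.mulVec x0) ≤ sMin A + ε :=
      le_of_lt (lt_of_le_of_lt (eNorm_top_le B G x0) hrlt)
    have hGx0 : eNorm (G.mulVec x0) ≤ sMin A + ε :=
      le_of_lt (lt_of_le_of_lt (eNorm_bot_le B G x0) hrlt)
    -- scaled lower bounds
    have hsBv : sInf SB * ‖v‖ ≤ eNorm (B.mulVec v) := by
      rcases eq_or_ne v 0 with hv0 | hv0
      · rw [hv0]; simp only [norm_zero, mul_zero]; exact eNorm_nonneg _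
      · have hvpos : 0 < ‖v‖ := norm_pos_iff.mpr hv0
        have hz1 : eNorm ((((‖v‖⁻¹ : ℝ) : ℂ) • v : EuclideanSpace ℂ (Fin n))) = 1 := by
          rw [eNorm_real_smul, abs_of_pos (inv_pos.mpr hvpos), eNorm_eq,
            inv_mul_cancel₀ (ne_of_gt hvpos)]
        have h := hSBle _ (Eplus.smul_mem _ hvP) hz1
        rw [eNorm_mulVec_real_smul, abs_of_pos (inv_pos.mpr hvpos)] at h
        calc sInf SB * ‖v‖ ≤ (‖v‖⁻¹ * eNorm (B.mulVec v)) * ‖v‖ :=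
              mul_le_mul_of_nonneg_right h (norm_nonneg _)
          _ = eNorm (B.mulVec v) := by field_simp
    have hsGu : sInf SG * ‖u‖ ≤ eNorm (G.mulVec u) := by
      rcases eq_or_ne u 0 with hu0 | hu0
      · rw [hu0]; simp only [norm_zero, mul_zero]; exact eNorm_nonneg _
      · have hupos : 0 < ‖u‖ := norm_pos_iff.mpr hu0
        have hz1 : eNorm ((((‖u‖⁻¹ : ℝ) : ℂ) • u : EuclideanSpace ℂ (Fin n))) = 1 := by
          rw [eNorm_real_smul, abs_of_pos (inv_pos.mpr hupos), eNorm_eq,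
            inv_mul_cancel₀ (ne_of_gt hupos)]
        have h := hSGle _ (Eminus.smul_mem _ huM) hz1
        rw [eNorm_mulVec_real_smul, abs_of_pos (inv_pos.mpr hupos)] at h
        calc sInf SG * ‖u‖ ≤ (‖u‖⁻¹ * eNorm (G.mulVec u)) * ‖u‖ :=
              mul_le_mul_of_nonneg_right h (norm_nonneg _)
          _ = eNorm (G.mulVec u) := by field_simp
    -- case split
    rcases le_or_gt (1 / 2 : ℝ) (‖v‖ ^ 2) with hv2 | hv2
    · -- ‖v‖ large: s_B is small
      have hvpos : 0 < ‖v‖ := by nlinarith [norm_nonneg v]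
      have h1 : 1 ≤ Real.sqrt 2 * ‖v‖ := by
        nlinarith [Real.sq_sqrt (by norm_num : (0:ℝ) ≤ 2), Real.sqrt_nonneg 2]
      have hsBsmall : sInf SB ≤ Real.sqrt 2 * (sMin A + ε) := by
        have h2 : sInf SB * ‖v‖ ≤ sMin A + ε := le_trans hsBv (hBvx.trans hBx0)
        nlinarith [mul_le_mul_of_nonneg_left h2 (Real.sqrt_nonneg 2)]
      calc sInf SB * sInf SG ≤ (Real.sqrt 2 * (sMin A + ε)) * opNorm A :=
            mul_le_mul hsBsmall hGA hsG0 (by positivity)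
        _ ≤ 4 * opNorm A * (sMin A + ε) := by
            nlinarith [sqrt_two_le_two, mul_nonneg hop0 (le_of_lt hSpos)]
    · -- ‖u‖ large: s_G is small
      have hu2 : (1 / 2 : ℝ) ≤ ‖u‖ ^ 2 := by nlinarith
      have hupos : 0 < ‖u‖ := by nlinarith [norm_nonneg u]
      have h1 : 1 ≤ Real.sqrt 2 * ‖u‖ := by
        nlinarith [Real.sq_sqrt (by norm_num : (0:ℝ) ≤ 2), Real.sqrt_nonneg 2]
      have hGu : eNorm (G.mulVec u) ≤ (sMin A + ε) + opNorm A * ‖v‖ := by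
        have huv : (u : Fin n → ℂ) + (v : Fin n → ℂ) = x0 :=
          congrArg (fun z : EuclideanSpace ℂ (Fin n) => (z : Fin n → ℂ))
            (show u + v = y from hyuv.symm)
        have hmv : G.mulVec (u : Fin n → ℂ) + G.mulVec (v : Fin n → ℂ) = G.mulVec x0 := by
          rw [← Matrix.mulVec_add, huv]
        have htr : eNorm (G.mulVec u) ≤ eNorm (G.mulVec x0) + eNorm (G.mulVec v) := by
          rw [← hmv]
          exact eNorm_le_add _ _
        have hGv : eNorm (G.mulVec v) ≤ opNorm A * ‖v‖ := by
          refine (eNorm_bot_le B G v).trans ?_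
          have := eNorm_mulVec_le_opNorm A v
          rwa [eNorm_eq v] at this
        linarith
      have hsGsmall : sInf SG ≤ Real.sqrt 2 * ((sMin A + ε) + opNorm A * ‖v‖) := by
        have h2 : sInf SG * ‖u‖ ≤ (sMin A + ε) + opNorm A * ‖v‖ := le_trans hsGu hGu
        nlinarith [mul_le_mul_of_nonneg_left h2 (Real.sqrt_nonneg 2),
          mul_pos (Real.sqrt_pos.mpr (by norm_num : (0:ℝ) < 2)) hupos,
          mul_nonneg hop0 (norm_nonneg v)]
      have hBvS : sInf SB * ‖v‖ ≤ sMin A + ε := le_trans hsBv (hBvx.trans hBx0)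
      calc sInf SB * sInf SG
          ≤ sInf SB * (Real.sqrt 2 * ((sMin A + ε) + opNorm A * ‖v‖)) :=
            mul_le_mul_of_nonneg_left hsGsmall hsB0
        _ = Real.sqrt 2 * (sInf SB * (sMin A + ε)) + Real.sqrt 2 * (opNorm A * (sInf SB * ‖v‖)) := by
            ring
        _ ≤ Real.sqrt 2 * (opNorm A * (sMin A + ε)) + Real.sqrt 2 * (opNorm A * (sMin A + ε)) := by
            gcongr
        _ ≤ 4 * opNorm A * (sMin A + ε) := by
            nlinarith [sqrt_two_le_two, mul_nonneg hop0 (le_of_lt hSpos)]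
  rcases eq_or_lt_of_le hop0 with h0 | hpos
  · have := key 1 one_pos
    rw [← h0] at this ⊢
    simpa using le_trans this (by norm_num)
  · refine le_of_forall_pos_le_add fun δ hδ => ?_
    have h4 : 0 < 4 * opNorm A := by linarith
    have := key (δ / (4 * opNorm A)) (div_pos hδ h4)
    calc sInf SB * sInf SG ≤ 4 * opNorm A * (sMin A + δ / (4 * opNorm A)) := this
      _ = 4 * opNorm A * sMin A + δ := by field_simp
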